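/- Define R(α) := π(1 − cos α)/(2 − cos α). Let 0 < α < π/2 and 0 < r ≤ π/2 with π²/4 − 2 cos α · r(π − r) ≥ 0. Then f(α, r, α/2) < 0 if and only if r < R(α); moreover f(α, R(α), α/2) = 0. -/

import Mathlib

open Real

/-- The function whose zeros parametrize the boundary contours associated to
isosceles triunduloids. -/
noncomputable def isoF (α r b : ℝ) : ℝ :=
  Real.sin (α - 2 * b) ^ 2 * Real.sin (2 * r) ^ 2 + Real.cos (2 * r) ^ 2 -
    Real.sin (Real.sqrt (π ^ 2 / 4 - 2 * Real.cos α * (r * (π - r)))) ^ 2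

/-- The maximal arm truncation length for isosceles triunduloids. -/
noncomputable def Rmax (α : ℝ) : ℝ := π * (1 - Real.cos α) / (2 - Real.cos α)

lemma sin_sq_abs (x : ℝ) : Real.sin |x| ^ 2 = Real.sin x ^ 2 := by
  rcases abs_choice x with h | h <;> rw [h] <;> simp [Real.sin_neg]

theorem stmt_13 (α : ℝ) (hα : 0 < α ∧ α < π / 2) :
    (∀ r : ℝ, 0 < r → r ≤ π / 2 →
      0 ≤ π ^ 2 / 4 - 2 * Real.cos α * (r * (π - r)) →
      (isoF α r (α / 2) < 0 ↔ r < Rmax α)) ∧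
    isoF α (Rmax α) (α / 2) = 0 := by
  obtain ⟨hα0, hα2⟩ := hα
  have hπ : (0:ℝ) < π := Real.pi_pos
  have hc0 : 0 < Real.cos α := Real.cos_pos_of_mem_Ioo ⟨by linarith, hα2⟩
  have hc1 : Real.cos α < 1 := by
    have := Real.cos_lt_cos_of_nonneg_of_le_pi (le_refl 0) (by linarith) hα0
    simpa using this
  set c := Real.cos α with hc
  have h2c : 0 < 2 - c := by linarith
  have hRmax : Rmax α = π * (1 - c) / (2 - c) := rfl
  constructor
  · intro r hr0 hr2 hE
    set E := π ^ 2 / 4 - 2 * c * (r * (π - r)) with hEdef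
    have hEle : E ≤ π ^ 2 / 4 := by
      have : 0 ≤ r * (π - r) := by nlinarith
      nlinarith
    have hsqle : Real.sqrt E ≤ π / 2 := by
      have h1 : Real.sqrt E ≤ Real.sqrt (π ^ 2 / 4) := Real.sqrt_le_sqrt hEle
      have h2 : Real.sqrt (π ^ 2 / 4) = π / 2 := by
        rw [show π ^ 2 / 4 = (π / 2) ^ 2 by ring, Real.sqrt_sq (by positivity)]
      linarith
    have hsq0 : 0 ≤ Real.sqrt E := Real.sqrt_nonneg E
    have habs : |π / 2 - 2 * r| ≤ π / 2 := abs_le.mpr ⟨by linarith, by linarith⟩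
    have habs0 : (0:ℝ) ≤ |π / 2 - 2 * r| := abs_nonneg _
    -- isoF simplification
    have h00 : α - 2 * (α / 2) = 0 := by ring
    have hiso : isoF α r (α / 2) = Real.cos (2 * r) ^ 2 - Real.sin (Real.sqrt E) ^ 2 := by
      simp [isoF, h00, hEdef, hc]
    have hcos : Real.cos (2 * r) ^ 2 = Real.sin |π / 2 - 2 * r| ^ 2 := by
      rw [sin_sq_abs, Real.sin_pi_div_two_sub]
    have key : ∀ x y : ℝ, 0 ≤ x → x ≤ π / 2 → 0 ≤ y → y ≤ π / 2 →
        (Real.sin x ^ 2 < Real.sin y ^ 2 ↔ x < y) := by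
      intro x y hx0 hx2 hy0 hy2
      have hsx : 0 ≤ Real.sin x := Real.sin_nonneg_of_nonneg_of_le_pi hx0 (by linarith)
      have hsy : 0 ≤ Real.sin y := Real.sin_nonneg_of_nonneg_of_le_pi hy0 (by linarith)
      rw [pow_lt_pow_iff_left₀ hsx hsy (by norm_num)]
      exact Real.strictMonoOn_sin.lt_iff_lt ⟨by linarith, hx2⟩ ⟨by linarith, hy2⟩
    rw [hiso, sub_neg, hcos, key _ _ habs0 habs hsq0 hsqle]
    have h3 : |π / 2 - 2 * r| < Real.sqrt E ↔ (π / 2 - 2 * r) ^ 2 < E := by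
      rw [Real.lt_sqrt habs0, sq_abs]
    rw [h3]
    rw [hRmax, lt_div_iff₀ h2c]
    constructor
    · intro h; nlinarith
    · intro h; nlinarith
  · -- equality at Rmax
    set R := Rmax α with hR
    have hRval : R * (2 - c) = π * (1 - c) := by
      rw [hRmax]; field_simp
    have hE : π ^ 2 / 4 - 2 * c * (R * (π - R)) = (π / 2 - 2 * R) ^ 2 := by
      linear_combination (-2*R) * hRval
    have hsqrt : Real.sqrt (π ^ 2 / 4 - 2 * c * (R * (π - R))) = |π / 2 - 2 * R| := by
      rw [hE, Real.sqrt_sq_eq_abs]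
    have h00 : α - 2 * (α / 2) = 0 := by ring
    simp only [isoF, ← hc, hsqrt, h00]
    rw [sin_sq_abs, Real.sin_pi_div_two_sub]
    simp
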